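/- For odd n, let f_n : {−1,1}^n → ℝ be defined by f_n(x) = sign(∑_{j=1}^n x_j) (note ∑ x_j ≠ 0 for odd n). Then 𝔼|∇f_n| = 2^{1−n} · C(n, (n+1)/2) · √((n+1)/2), where C(n,k) is the binomial coefficient, and consequently 𝔼|∇f_n| → 2/√π as n → ∞ through odd values. -/

import Mathlib

/-- Expectation with respect to the uniform probability measure on the Hamming cube
`{-1,1}^n`, encoded as `Fin n → Bool`. -/
noncomputable def cubeE {n : ℕ} (f : (Fin n → Bool) → ℝ) : ℝ :=
  (∑ x : Fin n → Bool, f x) / 2 ^ n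

/-- The `j`-th discrete partial derivative on the Hamming cube. -/
noncomputable def pderiv {n : ℕ} (j : Fin n) (f : (Fin n → Bool) → ℝ)
    (x : Fin n → Bool) : ℝ :=
  (f (Function.update x j true) - f (Function.update x j false)) / 2

/-- The gradient length `|∇f|(x) = (∑_j (∂_j f(x))²)^{1/2}`. -/
noncomputable def gradLen {n : ℕ} (f : (Fin n → Bool) → ℝ) (x : Fin n → Bool) : ℝ :=
  Real.sqrt (∑ j, (pderiv j f x) ^ 2)

/-- The coordinate value `x_i = ±1` of a Boolean-encoded cube point. -/
def chi (b : Bool) : ℝ := if b then 1 else -1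

/-- The majority-type function `f_n(x) = sign(∑_{j=1}^n x_j)` (with `sign 0 = 0`). -/
noncomputable def signFun (n : ℕ) (x : Fin n → Bool) : ℝ :=
  Real.sign (∑ j, chi (x j))


open Finset


def cz (b : Bool) : ℤ := if b then 1 else -1

def Sz {n : ℕ} (x : Fin n → Bool) : ℤ := ∑ j, cz (x j)

lemma chi_eq (b : Bool) : chi b = ((cz b : ℤ) : ℝ) := by cases b <;> simp [chi, cz]

lemma sum_chi {n : ℕ} (x : Fin n → Bool) : (∑ j, chi (x j)) = ((Sz x : ℤ) : ℝ) := by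
  simp [Sz, chi_eq]

def kt {n : ℕ} (x : Fin n → Bool) : ℕ := (univ.filter fun j => x j = true).card

lemma Sz_eq {n : ℕ} (x : Fin n → Bool) : Sz x = 2 * (kt x : ℤ) - n := by
  have : ∀ b : Bool, cz b = 2 * (if b then (1:ℤ) else 0) - 1 := by decide
  simp only [Sz, this, Finset.sum_sub_distrib, ← Finset.mul_sum, Finset.sum_const,
    Finset.card_univ, Fintype.card_fin, nsmul_eq_mul, mul_one]
  congr 1
  congr 1
  simp [kt, Finset.sum_boole]

lemma sum_update {n : ℕ} (x : Fin n → Bool) (j : Fin n) (b : Bool) :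
    Sz (Function.update x j b) = Sz x - cz (x j) + cz b := by
  unfold Sz
  rw [← Finset.add_sum_erase _ (fun i => cz (Function.update x j b i)) (Finset.mem_univ j),
    ← Finset.add_sum_erase _ (fun i => cz (x i)) (Finset.mem_univ j)]
  have : ∑ i ∈ univ.erase j, cz (Function.update x j b i) = ∑ i ∈ univ.erase j, cz (x i) :=
    Finset.sum_congr rfl fun i hi => by rw [Function.update_of_ne (Finset.mem_erase.1 hi).1]
  rw [this, Function.update_self]
  ring

lemma sign_int (a : ℤ) : Real.sign ((a : ℤ) : ℝ) = if 0 < a then 1 else if a < 0 then -1 else 0 := by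
  rcases lt_trichotomy a 0 with h | h | h
  · rw [Real.sign_of_neg (by exact_mod_cast h), if_neg (by omega), if_pos h]
  · simp [h, Real.sign_zero]
  · rw [Real.sign_of_pos (by exact_mod_cast h), if_pos h]

lemma pderiv_signFun {n : ℕ} (hn : Odd n) (x : Fin n → Bool) (j : Fin n) :
    pderiv j (signFun n) x = if Sz x - cz (x j) = 0 then 1 else 0 := by
  set A : ℤ := Sz x - cz (x j) with hA
  have hAeven : Even A := by
    obtain ⟨t, ht⟩ := hn
    have hk := Sz_eq x
    have hcz : cz (x j) = 1 ∨ cz (x j) = -1 := by cases x j <;> simp [cz]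
    rw [hA, Int.even_iff]
    omega
  have h1 : Sz (Function.update x j true) = A + 1 := by rw [sum_update, hA]; simp [cz]
  have h2 : Sz (Function.update x j false) = A - 1 := by rw [sum_update, hA]; simp [cz]; ring
  rw [pderiv]
  rw [show signFun n (Function.update x j true) = Real.sign ((A + 1 : ℤ) : ℝ) by
    rw [signFun, sum_chi, h1]]
  rw [show signFun n (Function.update x j false) = Real.sign ((A - 1 : ℤ) : ℝ) by
    rw [signFun, sum_chi, h2]]
  rcases eq_or_ne A 0 with h | h
  · rw [h, sign_int, sign_int]; norm_num
  · rw [if_neg h, sign_int, sign_int]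
    obtain ⟨c, hc⟩ := hAeven
    have hor : (0:ℤ) < A + 1 ∧ (0:ℤ) < A - 1 ∨ A + 1 < 0 ∧ A - 1 < 0 := by omega
    rcases hor with ⟨ha, hb⟩ | ⟨ha, hb⟩
    · rw [if_pos ha, if_pos hb]; ring
    · rw [if_neg (by omega), if_pos ha, if_neg (by omega), if_pos hb]; ring

lemma card_kt (n r : ℕ) :
    (univ.filter fun x : Fin n → Bool => kt x = r).card = n.choose r := by
  have := Finset.card_nbij' (s := univ.filter fun x : Fin n → Bool => kt x = r)
    (t := Finset.powersetCard r (univ : Finset (Fin n)))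
    (fun x => univ.filter fun j => x j = true) (fun s => fun j => decide (j ∈ s))
    (by
      intro x hx
      simp only [Finset.mem_coe, Finset.mem_filter, Finset.mem_univ, true_and] at hx
      rw [Finset.mem_coe, Finset.mem_powersetCard]
      exact ⟨Finset.subset_univ _, hx⟩)
    (by
      intro s hs
      rw [Finset.mem_coe, Finset.mem_powersetCard] at hs
      rw [Finset.mem_coe, Finset.mem_filter]
      simp only [Finset.mem_filter, Finset.mem_univ, true_and, kt]
      rw [← hs.2]
      congr 1
      ext j
      simp)
    (by
      intro x hx
      funext j
      simp)
    (by
      intro s hs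
      ext j
      simp)
  rw [this, Finset.card_powersetCard, Finset.card_univ, Fintype.card_fin]

lemma gradLen_signFun {n : ℕ} (hn : Odd n) (x : Fin n → Bool) :
    gradLen (signFun n) x =
      if Sz x = 1 ∨ Sz x = -1 then Real.sqrt (((n + 1) / 2 : ℕ)) else 0 := by
  obtain ⟨t, ht⟩ := hn
  have hdiv : (n + 1) / 2 = t + 1 := by omega
  have hsum : (∑ j, (pderiv j (signFun n) x) ^ 2) =
      ((univ.filter fun j => Sz x - cz (x j) = 0).card : ℝ) := by
    rw [← Finset.sum_boole]
    refine Finset.sum_congr rfl fun j _ => ?_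
    rw [pderiv_signFun ⟨t, ht⟩ x j]
    split <;> norm_num
  rw [gradLen, hsum]
  have hk := Sz_eq x
  rcases eq_or_ne (Sz x) 1 with hs | hs
  · rw [if_pos (Or.inl hs)]
    congr 1
    have hkt : kt x = t + 1 := by omega
    have : (univ.filter fun j => Sz x - cz (x j) = 0) = univ.filter fun j => x j = true := by
      refine Finset.filter_congr fun j _ => ?_
      rw [hs]
      cases h : x j <;> simp [cz]
    rw [this]
    rw [show ((univ.filter fun j => x j = true).card) = kt x from rfl, hkt, hdiv]
  rcases eq_or_ne (Sz x) (-1) with hs' | hs'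
  · rw [if_pos (Or.inr hs')]
    congr 1
    have hkt : kt x = t := by omega
    have : (univ.filter fun j => Sz x - cz (x j) = 0) = univ.filter fun j => ¬ (x j = true) := by
      refine Finset.filter_congr fun j _ => ?_
      rw [hs']
      cases h : x j <;> simp [cz]
    rw [this, Finset.filter_not, Finset.card_sdiff_of_subset (Finset.filter_subset _ _)]
    rw [Finset.card_univ, Fintype.card_fin,
      show ((univ.filter fun j => x j = true).card) = kt x from rfl, hkt, hdiv]
    congr 1
    omega
  · rw [if_neg (by tauto)]
    have : (univ.filter fun j => Sz x - cz (x j) = 0) = ∅ := by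
      refine Finset.filter_eq_empty_iff.2 fun j _ => ?_
      cases h : x j <;> simp [cz] <;> omega
    rw [this]
    simp

theorem part1 (n : ℕ) (hn : Odd n) :
    cubeE (gradLen (signFun n))
      = (2 : ℝ) ^ (1 - (n : ℤ)) * (n.choose ((n + 1) / 2)) *
          Real.sqrt (((n : ℝ) + 1) / 2) := by
  obtain ⟨t, ht⟩ := hn
  have hdiv : (n + 1) / 2 = t + 1 := by omega
  set c : ℝ := Real.sqrt (((n + 1) / 2 : ℕ)) with hc
  have hsum : (∑ x : Fin n → Bool, gradLen (signFun n) x)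
      = ((n.choose (t + 1) : ℝ) + (n.choose t : ℝ)) * c := by
    have h1 : ∀ x : Fin n → Bool, gradLen (signFun n) x
        = (if kt x = t + 1 then c else 0) + (if kt x = t then c else 0) := by
      intro x
      rw [gradLen_signFun ⟨t, ht⟩ x, ← hc]
      have hk := Sz_eq x
      have e1 : Sz x = 1 ↔ kt x = t + 1 := by omega
      have e2 : Sz x = -1 ↔ kt x = t := by omega
      rcases eq_or_ne (kt x) (t + 1) with h | h <;> rcases eq_or_ne (kt x) t with h' | h'
      · omega
      · rw [if_pos (Or.inl (e1.2 h)), if_pos h, if_neg h']; ring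
      · rw [if_pos (Or.inr (e2.2 h')), if_neg h, if_pos h']; ring
      · rw [if_neg (by rintro (h1 | h1) <;> omega), if_neg h, if_neg h']; ring
    rw [Finset.sum_congr rfl fun x _ => h1 x, Finset.sum_add_distrib,
      ← Finset.sum_filter, ← Finset.sum_filter, Finset.sum_const, Finset.sum_const,
      card_kt, card_kt]
    push_cast
    ring
  have hchoose : n.choose t = n.choose (t + 1) := by
    have h := Nat.choose_symm (show t + 1 ≤ n by omega)
    rwa [show n - (t + 1) = t by omega] at h
  rw [cubeE, hsum, hchoose, hdiv]
  have h2 : (2 : ℝ) ^ (1 - (n : ℤ)) = 2 / 2 ^ n := by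
    rw [zpow_sub₀ (two_ne_zero), zpow_one, zpow_natCast]
  rw [h2]
  have hcc : c = Real.sqrt (((n : ℝ) + 1) / 2) := by
    rw [hc, hdiv]
    congr 1
    push_cast [ht]
    ring
  rw [hcc]
  ring

noncomputable def gseq (m : ℕ) : ℝ := Real.sqrt m * ((2 * m).choose m : ℝ) / 4 ^ m

lemma gseq_nonneg (m : ℕ) : 0 ≤ gseq m := by
  unfold gseq; positivity

lemma gseq_eq (m : ℕ) :
    gseq m = Real.sqrt ((m : ℝ) / ((2 * m + 1) * Real.Wallis.W m)) := by
  have hW := Real.Wallis.W_eq_factorial_ratio m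
  have hfac : (0 : ℝ) < (Nat.factorial m : ℝ) := by exact_mod_cast Nat.factorial_pos m
  have hfac2 : (0 : ℝ) < (Nat.factorial (2 * m) : ℝ) := by exact_mod_cast Nat.factorial_pos (2 * m)
  have hC : ((2 * m).choose m : ℝ)
      = (Nat.factorial (2 * m) : ℝ) / ((Nat.factorial m : ℝ) * (Nat.factorial m : ℝ)) := by
    have h := Nat.choose_mul_factorial_mul_factorial (show m ≤ 2 * m by omega)
    rw [show 2 * m - m = m by omega] at h
    have h2' : (2 * m).choose m * (Nat.factorial m * Nat.factorial m) = Nat.factorial (2 * m) := by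
      rw [← mul_assoc]; exact h
    field_simp
    exact_mod_cast (by rw [sq]; exact h2' : (2 * m).choose m * m.factorial ^ 2 = (2 * m).factorial)
  have key : (gseq m) ^ 2 = (m : ℝ) / ((2 * m + 1) * Real.Wallis.W m) := by
    rw [gseq, hC, hW]
    rw [div_pow, mul_pow, Real.sq_sqrt (Nat.cast_nonneg m), div_pow]
    rw [show (2 : ℝ) ^ (4 * m) = ((4 : ℝ) ^ m) ^ 2 by
      rw [← pow_mul, show (4 : ℝ) = 2 ^ 2 by norm_num, ← pow_mul]; ring_nf]
    have h4 : (0 : ℝ) < (4 : ℝ) ^ m := by positivity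
    field_simp
  rw [← key, Real.sqrt_sq (gseq_nonneg m)]

lemma tendsto_gseq : Filter.Tendsto gseq Filter.atTop (nhds (1 / Real.sqrt Real.pi)) := by
  have hW := Real.Wallis.tendsto_W_nhds_pi_div_two
  have h12 : Filter.Tendsto (fun m : ℕ => (m : ℝ) / (2 * m + 1)) Filter.atTop (nhds (1 / 2)) := by
    have h := (tendsto_natCast_div_add_atTop (1 / 2 : ℝ)).const_mul (1 / 2 : ℝ)
    rw [mul_one] at h
    refine h.congr fun m => ?_
    rw [one_div, inv_mul_eq_div, div_div]
    congr 1
    ring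
  have harg : Filter.Tendsto (fun m : ℕ => (m : ℝ) / ((2 * m + 1) * Real.Wallis.W m))
      Filter.atTop (nhds ((1 / 2) / (Real.pi / 2))) := by
    have := h12.div hW (by positivity : (Real.pi / 2) ≠ 0)
    refine this.congr fun m => ?_
    simp only [Pi.div_apply]
    rw [div_div]
  have hval : (1 / 2 : ℝ) / (Real.pi / 2) = 1 / Real.pi := by
    field_simp
  rw [hval] at harg
  have := (Real.continuous_sqrt.tendsto _).comp harg
  have hsq : Real.sqrt (1 / Real.pi) = 1 / Real.sqrt Real.pi := by
    rw [one_div, one_div, Real.sqrt_inv]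
  rw [hsq] at this
  exact this.congr fun m => (gseq_eq m).symm

lemma cubeE_eq_gseq (n : ℕ) (hn : Odd n) :
    cubeE (gradLen (signFun n)) = 2 * gseq ((n + 1) / 2) := by
  obtain ⟨t, ht⟩ := hn
  have hdiv : (n + 1) / 2 = t + 1 := by omega
  rw [part1 n ⟨t, ht⟩, hdiv, gseq]
  set m := t + 1 with hm
  have hC : (2 * m).choose m = 2 * n.choose m := by
    have hp : (2 * m).choose m = (2 * t + 1).choose t + (2 * t + 1).choose (t + 1) := by
      rw [hm, show 2 * (t + 1) = (2 * t + 1) + 1 by ring]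
      exact Nat.choose_succ_succ _ _
    have hsymm : (2 * t + 1).choose t = (2 * t + 1).choose (t + 1) := by
      have h := Nat.choose_symm (show t + 1 ≤ 2 * t + 1 by omega)
      rwa [show 2 * t + 1 - (t + 1) = t by omega] at h
    rw [hp, hsymm, hm, ← ht]
    ring
  have h4 : (4 : ℝ) ^ m = 2 * 2 ^ n := by
    rw [show (4 : ℝ) = 2 ^ 2 by norm_num, ← pow_mul, show 2 * m = n + 1 by omega, pow_succ]
    ring
  have h2 : (2 : ℝ) ^ (1 - (n : ℤ)) = 2 / 2 ^ n := by
    rw [zpow_sub₀ (two_ne_zero), zpow_one, zpow_natCast]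
  have hs : Real.sqrt (((n : ℝ) + 1) / 2) = Real.sqrt m := by
    congr 1
    rw [ht]
    push_cast [hm]
    ring
  rw [h2, hs, h4]
  have hCr : ((2 * m).choose m : ℝ) = 2 * (n.choose m : ℝ) := by exact_mod_cast hC
  rw [hCr]
  have hp : (0 : ℝ) < 2 ^ n := by positivity
  field_simp

/-- For odd `n`, `𝔼|∇f_n| = 2^{1−n}·C(n,(n+1)/2)·√((n+1)/2)` for
`f_n = sign(∑ x_j)`, and consequently `𝔼|∇f_n| → 2/√π` as `n → ∞` through odd
values. -/
theorem grad_norm_of_sign_odd :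
    (∀ n : ℕ, Odd n →
      cubeE (gradLen (signFun n))
        = (2 : ℝ) ^ (1 - (n : ℤ)) * (n.choose ((n + 1) / 2)) *
            Real.sqrt (((n : ℝ) + 1) / 2)) ∧
    Filter.Tendsto (fun n : ℕ => cubeE (gradLen (signFun n)))
      (Filter.atTop ⊓ Filter.principal {n | Odd n})
      (nhds (2 / Real.sqrt Real.pi)) := by
  constructor
  · exact part1
  · have hphi : Filter.Tendsto (fun n : ℕ => (n + 1) / 2) Filter.atTop Filter.atTop :=
      Filter.tendsto_atTop_atTop.mpr fun b => ⟨2 * b, fun n hn => by omega⟩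
    have hG : Filter.Tendsto (fun n : ℕ => 2 * gseq ((n + 1) / 2)) Filter.atTop
        (nhds (2 / Real.sqrt Real.pi)) := by
      have h := (tendsto_gseq.comp hphi).const_mul (2 : ℝ)
      rwa [mul_one_div] at h
    have h1 : Filter.Tendsto (fun n : ℕ => 2 * gseq ((n + 1) / 2))
        (Filter.atTop ⊓ Filter.principal {n | Odd n}) (nhds (2 / Real.sqrt Real.pi)) :=
      hG.mono_left inf_le_left
    refine Filter.Tendsto.congr' ?_ h1
    filter_upwards [Filter.mem_inf_of_right (Filter.mem_principal_self {n | Odd n})] with n hn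
    exact (cubeE_eq_gseq n hn).symm
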